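/- Let A ⊆ H be a finite set, and let B be the (finite) Boolean algebra of subsets of ℕ×ℕ generated by the sets a⁻¹(0) and a⁻¹(1) for a ∈ A. Then exactly one atom of B satisfies ‖b‖ = ∞, and for all x, y ∈ H: if for every atom b of B and every ε ∈ {0,1} the sets x⁻¹(ε) ∩ b and y⁻¹(ε) ∩ b have the same cardinality, then there exists g ∈ G with g·a = a for all a ∈ A and g·x = y. -/

import Mathlib

open scoped ENNReal

/-- The weight of a point `(i,j) ∈ ℕ × ℕ`: `2 · 3^{-(i+1)}`. -/
noncomputable def wt (p : ℕ × ℕ) : ℝ≥0∞ := 2 * ((3 : ℝ≥0∞) ^ (p.1 + 1))⁻¹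

/-- `‖S‖ = Σ_{(i,j) ∈ S} 2 · 3^{-(i+1)} ∈ [0,∞]` for `S ⊆ ℕ × ℕ`. -/
noncomputable def nrmS (S : Set (ℕ × ℕ)) : ℝ≥0∞ := ∑' p, S.indicator wt p

lemma nrmS_mono {S T : Set (ℕ × ℕ)} (h : S ⊆ T) : nrmS S ≤ nrmS T :=
  ENNReal.tsum_le_tsum fun p =>
    Set.indicator_le_indicator_of_subset h (fun _ => by positivity) p

lemma nrmS_union_le (S T : Set (ℕ × ℕ)) : nrmS (S ∪ T) ≤ nrmS S + nrmS T := by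
  rw [nrmS, nrmS, nrmS, ← ENNReal.tsum_add]
  refine ENNReal.tsum_le_tsum fun p => ?_
  by_cases hS : p ∈ S
  · refine le_trans ?_ (le_add_right le_rfl)
    rw [Set.indicator_of_mem (Set.mem_union_left _ hS), Set.indicator_of_mem hS]
  · by_cases hT : p ∈ T
    · refine le_trans ?_ (le_add_left le_rfl)
      rw [Set.indicator_of_mem (Set.mem_union_right _ hT), Set.indicator_of_mem hT]
    · rw [Set.indicator_of_notMem (fun hc => hc.elim hS hT)]
      positivity

lemma nrmS_empty : nrmS ∅ = 0 := by simp [nrmS]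

/-- The support of `z : ℕ × ℕ → ZMod 2`. -/
def suppZ (z : ℕ × ℕ → ZMod 2) : Set (ℕ × ℕ) := {p | z p = 1}

/-- `‖z‖` for `z : ℕ × ℕ → ZMod 2`. -/
noncomputable def nrmZ (z : ℕ × ℕ → ZMod 2) : ℝ≥0∞ := nrmS (suppZ z)

/-- `H = {z : ℕ × ℕ → ZMod 2 | ‖z‖ < ∞}`, as an (additive) subgroup of the product group
`ℕ × ℕ → ZMod 2` with pointwise addition mod 2. -/
noncomputable def Hgrp : AddSubgroup ((ℕ × ℕ) → ZMod 2) where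
  carrier := {z | nrmZ z < ⊤}
  zero_mem' := by
    have h : suppZ 0 = ∅ := by ext p; simp [suppZ]
    simp [nrmZ, h, nrmS_empty]
  add_mem' {z w} hz hw := by
    have hsub : suppZ (z + w) ⊆ suppZ z ∪ suppZ w := by
      intro p hp
      by_contra hc
      simp only [Set.mem_union, suppZ, Set.mem_setOf_eq, not_or] at hc
      have hdi : ∀ x : ZMod 2, x = 0 ∨ x = 1 := by decide
      have hz0 : z p = 0 := (hdi (z p)).resolve_right hc.1
      have hw0 : w p = 0 := (hdi (w p)).resolve_right hc.2
      have hp' : (z + w) p = 1 := hp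
      rw [Pi.add_apply, hz0, hw0] at hp'
      exact absurd hp' (by decide)
    calc nrmZ (z + w) ≤ nrmS (suppZ z ∪ suppZ w) := nrmS_mono hsub
      _ ≤ nrmZ z + nrmZ w := nrmS_union_le _ _
      _ < ⊤ := ENNReal.add_lt_top.2 ⟨hz, hw⟩
  neg_mem' {z} hz := by
    have h : suppZ (-z) = suppZ z := by
      ext p; simp [suppZ, CharTwo.neg_eq]
    simpa [nrmZ, h] using hz
/-- `φ(x) = Σ_i 2 · x i · 3^{-(i+1)}`, the standard map from `2^ℕ` onto the ternary Cantor
set (values of `x` read as `0, 1` in `ℝ`). -/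
noncomputable def phiC (x : ℕ → ZMod 2) : ℝ :=
  ∑' i, 2 * ((x i).val : ℝ) * ((3 : ℝ) ^ (i + 1))⁻¹

/-- The metric on `H`: `d_H(z,w) = Σ_j |φ(z(·,j)) − φ(w(·,j))|`, the `ℓ¹`-distance between
the corresponding points of `C^ℕ ∩ ℓ¹`. -/
noncomputable def dH (z w : ↥Hgrp) : ℝ :=
  ∑' j, |phiC (fun i => (z : (ℕ × ℕ) → ZMod 2) (i, j)) -
          phiC (fun i => (w : (ℕ × ℕ) → ZMod 2) (i, j))|

/-- The support of a permutation `g` of `ℕ × ℕ`. -/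
def suppP (g : Equiv.Perm (ℕ × ℕ)) : Set (ℕ × ℕ) := {p | g p ≠ p}

lemma suppP_inv (g : Equiv.Perm (ℕ × ℕ)) : suppP g⁻¹ = suppP g := by
  ext p
  simp only [suppP, Set.mem_setOf_eq, ne_eq]
  constructor
  · intro h hc
    exact h (by conv_lhs => rw [← hc]; rw [← Equiv.Perm.mul_apply, inv_mul_cancel, Equiv.Perm.one_apply] ; )
  · intro h hc
    exact h (by conv_lhs => rw [← hc]; rw [← Equiv.Perm.mul_apply, mul_inv_cancel, Equiv.Perm.one_apply])

/-- `G = {g ∈ Sym(ℕ × ℕ) | ‖supp g‖ < ∞}`, as a subgroup of the symmetric group of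
`ℕ × ℕ`. -/
noncomputable def Ggrp : Subgroup (Equiv.Perm (ℕ × ℕ)) where
  carrier := {g | nrmS (suppP g) < ⊤}
  one_mem' := by
    have h : suppP 1 = ∅ := by ext p; simp [suppP]
    simp [h, nrmS_empty]
  mul_mem' {f g} hf hg := by
    have hsub : suppP (f * g) ⊆ suppP f ∪ suppP g := by
      intro p hp
      by_contra hc
      simp only [Set.mem_union, suppP, Set.mem_setOf_eq, ne_eq, not_or, not_not] at hc
      exact hp (by simp only [suppP, Set.mem_setOf_eq, Equiv.Perm.mul_apply, hc.2, hc.1] at *)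
    calc nrmS (suppP (f * g)) ≤ nrmS (suppP f ∪ suppP g) := nrmS_mono hsub
      _ ≤ nrmS (suppP f) + nrmS (suppP g) := nrmS_union_le _ _
      _ < ⊤ := ENNReal.add_lt_top.2 ⟨hf, hg⟩
  inv_mem' {g} hg := by simpa [suppP_inv] using hg

/-- The metric on `G`: `d(f,g) = ‖supp (f⁻¹ ∘ g)‖`. -/
noncomputable def dG (f g : ↥Ggrp) : ℝ :=
  (nrmS (suppP ((f : Equiv.Perm (ℕ × ℕ))⁻¹ * (g : Equiv.Perm (ℕ × ℕ))))).toReal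

/-- The action of `G` on `H`: `g • h = h ∘ g⁻¹`. -/
noncomputable def actGH (g : ↥Ggrp) (h : ↥Hgrp) : ↥Hgrp :=
  ⟨fun p => (h : (ℕ × ℕ) → ZMod 2) (((g : Equiv.Perm (ℕ × ℕ)))⁻¹ p), by
    have hsub : suppZ (fun p => (h : (ℕ × ℕ) → ZMod 2) (((g : Equiv.Perm (ℕ × ℕ)))⁻¹ p)) ⊆
        suppZ (h : (ℕ × ℕ) → ZMod 2) ∪ suppP (g : Equiv.Perm (ℕ × ℕ)) := by
      intro p hp
      by_cases hgp : ((g : Equiv.Perm (ℕ × ℕ)))⁻¹ p = p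
      · left
        have : (h : (ℕ × ℕ) → ZMod 2) (((g : Equiv.Perm (ℕ × ℕ)))⁻¹ p) = 1 := hp
        rwa [hgp] at this
      · right
        have : p ∈ suppP ((g : Equiv.Perm (ℕ × ℕ)))⁻¹ := hgp
        rwa [suppP_inv] at this
    show nrmZ _ < ⊤
    calc nrmZ _ ≤ nrmS (suppZ (h : (ℕ × ℕ) → ZMod 2) ∪ suppP (g : Equiv.Perm (ℕ × ℕ))) :=
          nrmS_mono hsub
      _ ≤ nrmZ (h : (ℕ × ℕ) → ZMod 2) + nrmS (suppP (g : Equiv.Perm (ℕ × ℕ))) :=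
          nrmS_union_le _ _
      _ < ⊤ := ENNReal.add_lt_top.2 ⟨h.2, g.2⟩⟩

/-- Membership in the Boolean algebra of subsets of `ℕ × ℕ` generated by a family `S`:
the smallest collection of sets containing `S` and `univ` and closed under complements and
(binary) unions. -/
inductive InBoolAlg (S : Set (Set (ℕ × ℕ))) : Set (ℕ × ℕ) → Prop
  | base {s : Set (ℕ × ℕ)} : s ∈ S → InBoolAlg S s
  | univ : InBoolAlg S Set.univ
  | compl {s : Set (ℕ × ℕ)} : InBoolAlg S s → InBoolAlg S sᶜ
  | union {s t : Set (ℕ × ℕ)} : InBoolAlg S s → InBoolAlg S t → InBoolAlg S (s ∪ t)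

/-- `b` is an atom of the Boolean algebra generated by `S`: a nonempty member all of whose
proper members-subsets are empty. -/
def IsAtomOfAlg (S : Set (Set (ℕ × ℕ))) (b : Set (ℕ × ℕ)) : Prop :=
  InBoolAlg S b ∧ b ≠ ∅ ∧ ∀ c : Set (ℕ × ℕ), InBoolAlg S c → c ⊆ b → c = ∅ ∨ c = b

/-- The generators `{a⁻¹(ε) : a ∈ A, ε ∈ {0,1}}` associated with a finite `A ⊆ H`. -/
def genSets (A : Finset ↥Hgrp) : Set (Set (ℕ × ℕ)) :=
  {s | ∃ a ∈ A, ∃ ε : ZMod 2, s = {p : ℕ × ℕ | (a : (ℕ × ℕ) → ZMod 2) p = ε}}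

lemma wt_ne_zero (p : ℕ × ℕ) : wt p ≠ 0 := by
  simp only [wt]
  refine mul_ne_zero (by norm_num) ?_
  rw [ENNReal.inv_ne_zero]
  exact ENNReal.pow_ne_top (by norm_num)

lemma nrmS_eq_top_of_row {S : Set (ℕ × ℕ)} {i : ℕ}
    (h : {j | (i, j) ∈ S}.Infinite) : nrmS S = ⊤ := by
  have h1 : ∑' j : ℕ, S.indicator wt (i, j) ≤ nrmS S := by
    exact ENNReal.tsum_comp_le_tsum_of_injective
      (f := fun j => ((i, j) : ℕ × ℕ)) (fun a b hab => (Prod.mk.injEq _ _ _ _ ▸ hab).2)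
      (S.indicator wt)
  have h2 : ∀ j : ℕ, S.indicator wt (i, j) =
      {j | (i, j) ∈ S}.indicator (fun _ => wt (i, 0)) j := by
    intro j
    by_cases hj : (i, j) ∈ S
    · have e1 : {j | (i, j) ∈ S}.indicator (fun _ => wt (i, 0)) j = wt (i, 0) :=
        Set.indicator_of_mem (s := {j | (i, j) ∈ S}) (a := j) hj _
      rw [Set.indicator_of_mem hj, e1, wt, wt]
    · have e1 : {j | (i, j) ∈ S}.indicator (fun _ => wt (i, 0)) j = 0 :=
        Set.indicator_of_notMem (s := {j | (i, j) ∈ S}) (a := j) hj _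
      rw [Set.indicator_of_notMem hj, e1]
  have h3 : ∑' j : ℕ, S.indicator wt (i, j) = ⊤ := by
    rw [tsum_congr h2, ← tsum_subtype]
    haveI := h.to_subtype
    exact ENNReal.tsum_const_eq_top_of_ne_zero (wt_ne_zero _)
  rw [h3] at h1
  exact top_le_iff.mp h1

lemma nrmS_univ : nrmS (Set.univ : Set (ℕ × ℕ)) = ⊤ := by
  refine nrmS_eq_top_of_row (i := 0) ?_
  have : {j : ℕ | (0, j) ∈ (Set.univ : Set (ℕ × ℕ))} = Set.univ := by ext j; simp
  rw [this]; exact Set.infinite_univ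

lemma row_finite_of_lt_top {S : Set (ℕ × ℕ)} (h : nrmS S < ⊤) (i : ℕ) :
    {j | (i, j) ∈ S}.Finite := by
  by_contra hc
  rw [nrmS_eq_top_of_row (Set.not_infinite.not_right.mp hc)] at h
  exact absurd h (lt_irrefl _)

lemma tsum_wt_row : ∑' i : ℕ, wt (i, 0) < ⊤ := by
  have h1 : ∀ i : ℕ, wt (i, 0) = 2 * (3 : ℝ≥0∞)⁻¹ ^ (i + 1) := by
    intro i; rw [wt, ENNReal.inv_pow]
  rw [tsum_congr h1, ENNReal.tsum_mul_left]
  have h2 : ∑' i : ℕ, (3 : ℝ≥0∞)⁻¹ ^ (i + 1) ≤ ∑' i : ℕ, (3 : ℝ≥0∞)⁻¹ ^ i := by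
    exact ENNReal.tsum_comp_le_tsum_of_injective (f := fun i : ℕ => i + 1)
      (fun a b h => by simpa using h) _
  rw [ENNReal.tsum_geometric] at h2
  have h3 : ((1 : ℝ≥0∞) - 3⁻¹)⁻¹ < ⊤ := by
    rw [ENNReal.inv_lt_top]
    refine tsub_pos_of_lt ?_
    rw [ENNReal.inv_lt_one]
    norm_num
  calc 2 * ∑' i : ℕ, (3 : ℝ≥0∞)⁻¹ ^ (i + 1) ≤ 2 * ((1 : ℝ≥0∞) - 3⁻¹)⁻¹ :=
        mul_le_mul_right h2 _
    _ < ⊤ := ENNReal.mul_lt_top (by norm_num) h3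

lemma exists_disjoint_infinite {D : Set (ℕ × ℕ)} (hD : nrmS D < ⊤) :
    ∃ E : Set (ℕ × ℕ), E.Infinite ∧ nrmS E < ⊤ ∧ ∀ p ∈ E, p ∉ D := by
  classical
  have hrow : ∀ i : ℕ, ∃ j : ℕ, (i, j) ∉ D := by
    intro i
    have hfin := row_finite_of_lt_top hD i
    have : ({j | (i, j) ∈ D} : Set ℕ) ≠ Set.univ := by
      intro hc
      exact Set.infinite_univ (hc ▸ hfin)
    obtain ⟨j, hj⟩ := (Set.ne_univ_iff_exists_notMem _).mp this
    exact ⟨j, hj⟩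
  choose jf hjf using hrow
  set f : ℕ → ℕ × ℕ := fun i => (i, jf i) with hf
  have hinj : Function.Injective f := by
    intro a b hab
    exact (Prod.mk.injEq _ _ _ _ ▸ hab).1
  refine ⟨Set.range f, Set.infinite_range_of_injective hinj, ?_, ?_⟩
  · have h1 : nrmS (Set.range f) = ∑' p : ↥(Set.range f), wt ↑p := (tsum_subtype _ _).symm
    rw [h1, ← (Equiv.ofInjective f hinj).tsum_eq (fun p : ↥(Set.range f) => wt ↑p)]
    have h2 : ∀ i : ℕ, wt ↑(Equiv.ofInjective f hinj i) = wt (i, 0) := by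
      intro i
      have : (↑(Equiv.ofInjective f hinj i) : ℕ × ℕ) = f i := rfl
      rw [this, hf, wt, wt]
    rw [tsum_congr h2]
    exact tsum_wt_row
  · rintro p ⟨i, rfl⟩
    exact hjf i


lemma zmod2_em (v : ZMod 2) : v = 0 ∨ v = 1 := by revert v; decide

lemma zmod2_eq_zero {v : ZMod 2} (h : v ≠ 1) : v = 0 := (zmod2_em v).resolve_right h

lemma inBoolAlg_inter {S : Set (Set (ℕ × ℕ))} {s t : Set (ℕ × ℕ)}
    (hs : InBoolAlg S s) (ht : InBoolAlg S t) : InBoolAlg S (s ∩ t) := by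
  have h := InBoolAlg.compl (InBoolAlg.union hs.compl ht.compl)
  rwa [Set.compl_union, compl_compl, compl_compl] at h

lemma inBoolAlg_mono {S T : Set (Set (ℕ × ℕ))} (hST : S ⊆ T) {c : Set (ℕ × ℕ)}
    (hc : InBoolAlg S c) : InBoolAlg T c := by
  induction hc with
  | base hs => exact InBoolAlg.base (hST hs)
  | univ => exact InBoolAlg.univ
  | compl _ ih => exact ih.compl
  | union _ _ ih1 ih2 => exact ih1.union ih2

lemma inBoolAlg_congr {A : Finset ↥Hgrp} {c : Set (ℕ × ℕ)} (hc : InBoolAlg (genSets A) c)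
    {p q : ℕ × ℕ} (h : ∀ a ∈ A, (a : (ℕ × ℕ) → ZMod 2) p = (a : (ℕ × ℕ) → ZMod 2) q) :
    p ∈ c ↔ q ∈ c := by
  induction hc with
  | base hs =>
    obtain ⟨a, ha, ε, rfl⟩ := hs
    simp only [Set.mem_setOf_eq, h a ha]
  | univ => simp
  | compl _ ih => simp only [Set.mem_compl_iff, ih]
  | union _ _ ih1 ih2 => simp only [Set.mem_union, ih1, ih2]

/-- The atom (cell) of the Boolean algebra containing a given point `p`. -/
def cellOf (A : Finset ↥Hgrp) (p : ℕ × ℕ) : Set (ℕ × ℕ) :=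
  {q | ∀ a ∈ A, (a : (ℕ × ℕ) → ZMod 2) q = (a : (ℕ × ℕ) → ZMod 2) p}

lemma self_mem_cellOf (A : Finset ↥Hgrp) (p : ℕ × ℕ) : p ∈ cellOf A p :=
  fun _ _ => rfl

lemma cellOf_inBoolAlg (A : Finset ↥Hgrp) (p : ℕ × ℕ) :
    InBoolAlg (genSets A) (cellOf A p) := by
  classical
  induction A using Finset.induction_on with
  | empty =>
    have h : cellOf ∅ p = Set.univ := by
      ext q; simp [cellOf]
    rw [h]; exact InBoolAlg.univ
  | insert a A' hnotmem ih =>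
    have h : cellOf (insert a A') p =
        {q | (a : (ℕ × ℕ) → ZMod 2) q = (a : (ℕ × ℕ) → ZMod 2) p} ∩ cellOf A' p := by
      ext q
      simp only [cellOf, Set.mem_setOf_eq, Set.mem_inter_iff, Finset.mem_insert]
      constructor
      · intro h; exact ⟨h a (Or.inl rfl), fun b hb => h b (Or.inr hb)⟩
      · rintro ⟨h1, h2⟩ b (rfl | hb)
        · exact h1
        · exact h2 b hb
    rw [h]
    refine inBoolAlg_inter (InBoolAlg.base ?_) (inBoolAlg_mono ?_ ih)
    · exact ⟨a, Finset.mem_insert_self a A', (a : (ℕ × ℕ) → ZMod 2) p, rfl⟩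
    · rintro s ⟨b, hb, ε, rfl⟩
      exact ⟨b, Finset.mem_insert_of_mem hb, ε, rfl⟩

lemma cellOf_isAtom (A : Finset ↥Hgrp) (p : ℕ × ℕ) :
    IsAtomOfAlg (genSets A) (cellOf A p) := by
  refine ⟨cellOf_inBoolAlg A p, ?_, ?_⟩
  · intro hc
    exact absurd (hc ▸ self_mem_cellOf A p) (Set.notMem_empty p)
  · intro c hc hsub
    by_cases hne : c = ∅
    · exact Or.inl hne
    · right
      obtain ⟨q, hq⟩ := Set.nonempty_iff_ne_empty.mpr hne
      refine Set.Subset.antisymm hsub (fun r hr => ?_)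
      exact (inBoolAlg_congr hc (fun a ha => ((hsub hq) a ha).trans ((hr a ha)).symm)).mp hq

lemma atom_eq_cellOf {A : Finset ↥Hgrp} {b : Set (ℕ × ℕ)} {p : ℕ × ℕ}
    (hb : IsAtomOfAlg (genSets A) b) (hp : p ∈ b) : b = cellOf A p := by
  rcases hb.2.2 (b ∩ cellOf A p) (inBoolAlg_inter hb.1 (cellOf_inBoolAlg A p))
      Set.inter_subset_left with h | h
  · exact absurd (h ▸ ⟨hp, self_mem_cellOf A p⟩) (Set.notMem_empty p)
  · refine Set.Subset.antisymm (fun q hq => ?_) ?_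
    · rw [← h] at hq; exact hq.2
    · intro q hq
      exact (inBoolAlg_congr hb.1 (fun a ha => (hq a ha).symm)).mp hp

lemma nrmS_biUnion_lt_top (A : Finset ↥Hgrp) :
    nrmS (⋃ a ∈ A, suppZ (a : (ℕ × ℕ) → ZMod 2)) < ⊤ := by
  classical
  induction A using Finset.induction_on with
  | empty => simp [nrmS_empty]
  | insert a A' hnotmem ih =>
    rw [Finset.set_biUnion_insert]
    refine lt_of_le_of_lt (nrmS_union_le _ _) (ENNReal.add_lt_top.2 ⟨a.2, ih⟩)


lemma exists_perm_of_fiber_equiv {α : Type*} {I : Type*} (τ σ : α → I)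
    (hF : ∀ t, Nonempty ({m // τ m = t} ≃ {m // σ m = t})) :
    ∃ e : Equiv.Perm α, ∀ m, σ (e m) = τ m := by
  classical
  have F : ∀ t, {m // τ m = t} ≃ {m // σ m = t} := fun t => (hF t).some
  refine ⟨(Equiv.sigmaFiberEquiv τ).symm.trans
    ((Equiv.sigmaCongrRight F).trans (Equiv.sigmaFiberEquiv σ)), fun m => ?_⟩
  exact ((F (τ m)) ⟨m, rfl⟩).2

/-- Pull a subtype over `↥M` out to a plain set, when the predicate forces membership. -/
def fiber_equiv_set {β : Type*} {M : Set β} (P : β → Prop) (hPM : ∀ p, P p → p ∈ M) :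
    {m : ↥M // P ↑m} ≃ ↥{p | P p} :=
  ⟨fun m => ⟨↑↑m, m.2⟩, fun p => ⟨⟨↑p, hPM ↑p p.2⟩, p.2⟩,
   fun _ => Subtype.ext (Subtype.ext rfl), fun _ => rfl⟩

/-- Let `A ⊆ H` be finite and let `B` be the Boolean algebra of subsets
of `ℕ × ℕ` generated by the sets `a⁻¹(0)`, `a⁻¹(1)` for `a ∈ A`. Then exactly one atom `b` of
`B` satisfies `‖b‖ = ∞`, and for all `x, y ∈ H`: if for every atom `b` of `B` and every
`ε ∈ {0,1}` the sets `x⁻¹(ε) ∩ b` and `y⁻¹(ε) ∩ b` have the same cardinality, then there is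
`g ∈ G` fixing every element of `A` with `g • x = y`. -/
theorem statement16 (A : Finset ↥Hgrp) :
    (∃! b : Set (ℕ × ℕ), IsAtomOfAlg (genSets A) b ∧ nrmS b = ⊤) ∧
    (∀ x y : ↥Hgrp,
      (∀ b : Set (ℕ × ℕ), IsAtomOfAlg (genSets A) b → ∀ ε : ZMod 2,
        Nonempty (({p : ℕ × ℕ | (x : (ℕ × ℕ) → ZMod 2) p = ε} ∩ b : Set (ℕ × ℕ)) ≃
                  ({p : ℕ × ℕ | (y : (ℕ × ℕ) → ZMod 2) p = ε} ∩ b : Set (ℕ × ℕ)))) →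
      ∃ g : ↥Ggrp, (∀ a ∈ A, actGH g a = a) ∧ actGH g x = y) := by
  classical
  have hD0 : nrmS (⋃ a ∈ A, suppZ (a : (ℕ × ℕ) → ZMod 2)) < ⊤ := nrmS_biUnion_lt_top A
  set D0 : Set (ℕ × ℕ) := ⋃ a ∈ A, suppZ (a : (ℕ × ℕ) → ZMod 2) with hD0def
  have hD0ne : D0 ≠ Set.univ := by
    intro hc
    rw [hc, nrmS_univ] at hD0
    exact absurd hD0 (lt_irrefl _)
  obtain ⟨p₀, hp₀⟩ := (Set.ne_univ_iff_exists_notMem _).mp hD0ne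
  have hsuppD0 : ∀ a ∈ A, suppZ (a : (ℕ × ℕ) → ZMod 2) ⊆ D0 := by
    intro a ha q hq
    exact Set.mem_iUnion₂.mpr ⟨a, ha, hq⟩
  have hp₀0 : ∀ a ∈ A, (a : (ℕ × ℕ) → ZMod 2) p₀ = 0 := by
    intro a ha
    exact zmod2_eq_zero (fun h1 => hp₀ (hsuppD0 a ha h1))
  have hcompl : (cellOf A p₀)ᶜ ⊆ D0 := by
    intro q hq
    simp only [Set.mem_compl_iff, cellOf, Set.mem_setOf_eq, not_forall] at hq
    obtain ⟨a, ha, hne⟩ := hq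
    rw [hp₀0 a ha] at hne
    have h1 : (a : (ℕ × ℕ) → ZMod 2) q = 1 := (zmod2_em _).resolve_left hne
    exact hsuppD0 a ha h1
  have hb₀top : nrmS (cellOf A p₀) = ⊤ := by
    by_contra hc
    have h1 : nrmS (Set.univ : Set (ℕ × ℕ)) < ⊤ := by
      calc nrmS (Set.univ : Set (ℕ × ℕ)) = nrmS (cellOf A p₀ ∪ (cellOf A p₀)ᶜ) := by
            rw [Set.union_compl_self]
        _ ≤ nrmS (cellOf A p₀) + nrmS (cellOf A p₀)ᶜ := nrmS_union_le _ _
        _ < ⊤ := ENNReal.add_lt_top.2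
            ⟨lt_top_iff_ne_top.mpr hc, lt_of_le_of_lt (nrmS_mono hcompl) hD0⟩
    rw [nrmS_univ] at h1
    exact absurd h1 (lt_irrefl _)
  constructor
  · refine ⟨cellOf A p₀, ⟨cellOf_isAtom A p₀, hb₀top⟩, ?_⟩
    rintro b' ⟨hb', htop'⟩
    obtain ⟨q, hq⟩ := Set.nonempty_iff_ne_empty.mpr hb'.2.1
    rw [atom_eq_cellOf hb' hq]
    by_cases h0 : ∀ a ∈ A, (a : (ℕ × ℕ) → ZMod 2) q = 0
    · ext r
      simp only [cellOf, Set.mem_setOf_eq]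
      constructor
      · intro h a ha; rw [h a ha, h0 a ha, hp₀0 a ha]
      · intro h a ha; rw [h a ha, h0 a ha, hp₀0 a ha]
    · exfalso
      push_neg at h0
      obtain ⟨a₀, ha₀, hne⟩ := h0
      have ha₀1 : (a₀ : (ℕ × ℕ) → ZMod 2) q = 1 := (zmod2_em _).resolve_left hne
      have hsub : b' ⊆ suppZ (a₀ : (ℕ × ℕ) → ZMod 2) := by
        intro r hr
        rw [atom_eq_cellOf hb' hq] at hr
        show (a₀ : (ℕ × ℕ) → ZMod 2) r = 1
        rw [hr a₀ ha₀, ha₀1]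
      have : nrmS b' < ⊤ :=
        lt_of_le_of_lt (nrmS_mono (hsub.trans (hsuppD0 a₀ ha₀))) hD0
      rw [htop'] at this
      exact absurd this (lt_irrefl _)
  · intro x y hxy
    have hDnorm : nrmS (suppZ (x : (ℕ × ℕ) → ZMod 2) ∪ suppZ (y : (ℕ × ℕ) → ZMod 2) ∪ D0) <
        ⊤ := by
      refine lt_of_le_of_lt (nrmS_union_le _ _) (ENNReal.add_lt_top.2 ⟨?_, hD0⟩)
      exact lt_of_le_of_lt (nrmS_union_le _ _) (ENNReal.add_lt_top.2 ⟨x.2, y.2⟩)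
    obtain ⟨E, hEinf, hEnorm, hED⟩ := exists_disjoint_infinite hDnorm
    set D : Set (ℕ × ℕ) := suppZ (x : (ℕ × ℕ) → ZMod 2) ∪ suppZ (y : (ℕ × ℕ) → ZMod 2) ∪ D0
      with hDdef
    set M : Set (ℕ × ℕ) := D ∪ E with hMdef
    have hMnorm : nrmS M < ⊤ :=
      lt_of_le_of_lt (nrmS_union_le _ _) (ENNReal.add_lt_top.2 ⟨hDnorm, hEnorm⟩)
    have hxD : suppZ (x : (ℕ × ℕ) → ZMod 2) ⊆ D :=
      fun p hp => Set.mem_union_left _ (Set.mem_union_left _ hp)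
    have hyD : suppZ (y : (ℕ × ℕ) → ZMod 2) ⊆ D :=
      fun p hp => Set.mem_union_left _ (Set.mem_union_right _ hp)
    have haD : ∀ a ∈ A, suppZ (a : (ℕ × ℕ) → ZMod 2) ⊆ D :=
      fun a ha => (hsuppD0 a ha).trans Set.subset_union_right
    have hDM : D ⊆ M := Set.subset_union_left
    have hEM : E ⊆ M := Set.subset_union_right
    have houtD : ∀ p, p ∉ D → (x : (ℕ × ℕ) → ZMod 2) p = 0 ∧ (y : (ℕ × ℕ) → ZMod 2) p = 0 ∧
        ∀ a ∈ A, (a : (ℕ × ℕ) → ZMod 2) p = 0 := by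
      intro p hp
      exact ⟨zmod2_eq_zero (fun h1 => hp (hxD h1)), zmod2_eq_zero (fun h1 => hp (hyD h1)),
        fun a ha => zmod2_eq_zero (fun h1 => hp (haD a ha h1))⟩
    have key : ∀ t : ZMod 2 × ({a : ↥Hgrp // a ∈ A} → ZMod 2),
        Nonempty ({m : ↥M // ((x : (ℕ × ℕ) → ZMod 2) ↑m,
            fun a : {a : ↥Hgrp // a ∈ A} => (a.1 : (ℕ × ℕ) → ZMod 2) ↑m) = t} ≃
          {m : ↥M // ((y : (ℕ × ℕ) → ZMod 2) ↑m,
            fun a : {a : ↥Hgrp // a ∈ A} => (a.1 : (ℕ × ℕ) → ZMod 2) ↑m) = t}) := by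
      rintro ⟨ε, η⟩
      by_cases h0 : ε = 0 ∧ ∀ a, η a = 0
      · obtain ⟨hε, hη⟩ := h0
        have hmemx : ∀ p : ↥E, ((x : (ℕ × ℕ) → ZMod 2) ↑p,
            fun a : {a : ↥Hgrp // a ∈ A} => (a.1 : (ℕ × ℕ) → ZMod 2) ↑p) = (ε, η) := by
          intro p
          obtain ⟨hx0, _, ha0⟩ := houtD ↑p (hED ↑p p.2)
          rw [hx0, hε]
          congr 1
          funext a
          rw [ha0 a.1 a.2, hη a]
        have hmemy : ∀ p : ↥E, ((y : (ℕ × ℕ) → ZMod 2) ↑p,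
            fun a : {a : ↥Hgrp // a ∈ A} => (a.1 : (ℕ × ℕ) → ZMod 2) ↑p) = (ε, η) := by
          intro p
          obtain ⟨_, hy0, ha0⟩ := houtD ↑p (hED ↑p p.2)
          rw [hy0, hε]
          congr 1
          funext a
          rw [ha0 a.1 a.2, hη a]
        haveI := hEinf.to_subtype
        haveI : Infinite {m : ↥M // ((x : (ℕ × ℕ) → ZMod 2) ↑m,
            fun a : {a : ↥Hgrp // a ∈ A} => (a.1 : (ℕ × ℕ) → ZMod 2) ↑m) = (ε, η)} :=
          Infinite.of_injective (fun p : ↥E => ⟨⟨↑p, hEM p.2⟩, hmemx p⟩)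
            (fun p q hpq =>
              Subtype.ext (congrArg (fun m => m.1.1) hpq))
        haveI : Infinite {m : ↥M // ((y : (ℕ × ℕ) → ZMod 2) ↑m,
            fun a : {a : ↥Hgrp // a ∈ A} => (a.1 : (ℕ × ℕ) → ZMod 2) ↑m) = (ε, η)} :=
          Infinite.of_injective (fun p : ↥E => ⟨⟨↑p, hEM p.2⟩, hmemy p⟩)
            (fun p q hpq =>
              Subtype.ext (congrArg (fun m => m.1.1) hpq))
        exact nonempty_equiv_of_countable
      · have h1 : ε = 1 ∨ ∃ a, η a = 1 := by
          by_contra hc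
          push_neg at hc
          exact h0 ⟨zmod2_eq_zero hc.1, fun a => zmod2_eq_zero (hc.2 a)⟩
        set P : (ℕ × ℕ) → Prop := fun p => (x : (ℕ × ℕ) → ZMod 2) p = ε ∧
          ∀ a : {a : ↥Hgrp // a ∈ A}, (a.1 : (ℕ × ℕ) → ZMod 2) p = η a with hPdef
        set Q : (ℕ × ℕ) → Prop := fun p => (y : (ℕ × ℕ) → ZMod 2) p = ε ∧
          ∀ a : {a : ↥Hgrp // a ∈ A}, (a.1 : (ℕ × ℕ) → ZMod 2) p = η a with hQdef
        have hPM : ∀ p, P p → p ∈ M := by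
          intro p hp
          rcases h1 with h1 | ⟨a, ha⟩
          · exact hDM (hxD (show _ = 1 by rw [hp.1, h1]))
          · exact hDM (haD a.1 a.2 (show _ = 1 by rw [hp.2 a, ha]))
        have hQM : ∀ p, Q p → p ∈ M := by
          intro p hp
          rcases h1 with h1 | ⟨a, ha⟩
          · exact hDM (hyD (show _ = 1 by rw [hp.1, h1]))
          · exact hDM (haD a.1 a.2 (show _ = 1 by rw [hp.2 a, ha]))
        have hPiff : ∀ m : ↥M, (((x : (ℕ × ℕ) → ZMod 2) ↑m,
            fun a : {a : ↥Hgrp // a ∈ A} => (a.1 : (ℕ × ℕ) → ZMod 2) ↑m) = (ε, η)) ↔ P ↑m := by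
          intro m
          rw [Prod.mk.injEq, hPdef]
          constructor
          · rintro ⟨h2, h3⟩; exact ⟨h2, fun a => congrFun h3 a⟩
          · rintro ⟨h2, h3⟩; exact ⟨h2, funext h3⟩
        have hQiff : ∀ m : ↥M, (((y : (ℕ × ℕ) → ZMod 2) ↑m,
            fun a : {a : ↥Hgrp // a ∈ A} => (a.1 : (ℕ × ℕ) → ZMod 2) ↑m) = (ε, η)) ↔ Q ↑m := by
          intro m
          rw [Prod.mk.injEq, hQdef]
          constructor
          · rintro ⟨h2, h3⟩; exact ⟨h2, fun a => congrFun h3 a⟩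
          · rintro ⟨h2, h3⟩; exact ⟨h2, funext h3⟩
        have e1 := (Equiv.subtypeEquivRight hPiff).trans (fiber_equiv_set P hPM)
        have e2 := (Equiv.subtypeEquivRight hQiff).trans (fiber_equiv_set Q hQM)
        by_cases hcell : ∃ p₁ : ℕ × ℕ,
            ∀ a : {a : ↥Hgrp // a ∈ A}, (a.1 : (ℕ × ℕ) → ZMod 2) p₁ = η a
        · obtain ⟨p₁, hp₁⟩ := hcell
          have hcellEq : ∀ q : ℕ × ℕ,
              (∀ a : {a : ↥Hgrp // a ∈ A}, (a.1 : (ℕ × ℕ) → ZMod 2) q = η a) ↔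
                q ∈ cellOf A p₁ := by
            intro q
            constructor
            · intro h a ha
              rw [(h ⟨a, ha⟩ : _), hp₁ ⟨a, ha⟩]
            · intro h a
              rw [h a.1 a.2, hp₁ a]
          have hPset : {p | P p} = {p : ℕ × ℕ | (x : (ℕ × ℕ) → ZMod 2) p = ε} ∩ cellOf A p₁ := by
            ext q
            simp only [Set.mem_setOf_eq, Set.mem_inter_iff, hPdef]
            exact and_congr_right (fun _ => hcellEq q)
          have hQset : {p | Q p} = {p : ℕ × ℕ | (y : (ℕ × ℕ) → ZMod 2) p = ε} ∩ cellOf A p₁ := by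
            ext q
            simp only [Set.mem_setOf_eq, Set.mem_inter_iff, hQdef]
            exact and_congr_right (fun _ => hcellEq q)
          obtain ⟨e3⟩ := hxy (cellOf A p₁) (cellOf_isAtom A p₁) ε
          exact ⟨e1.trans ((Equiv.setCongr hPset).trans
            (e3.trans ((Equiv.setCongr hQset).symm.trans e2.symm)))⟩
        · haveI : IsEmpty ↥{p | P p} := by
            constructor
            rintro ⟨p, hp⟩
            exact hcell ⟨p, hp.2⟩
          haveI : IsEmpty ↥{p | Q p} := by
            constructor
            rintro ⟨p, hp⟩
            exact hcell ⟨p, hp.2⟩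
          exact ⟨e1.trans ((Equiv.equivOfIsEmpty _ _).trans e2.symm)⟩
    obtain ⟨e, he⟩ := exists_perm_of_fiber_equiv
      (fun m : ↥M => ((x : (ℕ × ℕ) → ZMod 2) ↑m,
        fun a : {a : ↥Hgrp // a ∈ A} => (a.1 : (ℕ × ℕ) → ZMod 2) ↑m))
      (fun m : ↥M => ((y : (ℕ × ℕ) → ZMod 2) ↑m,
        fun a : {a : ↥Hgrp // a ∈ A} => (a.1 : (ℕ × ℕ) → ZMod 2) ↑m))
      key
    set g' : Equiv.Perm (ℕ × ℕ) := e.extendDomain (Equiv.refl ↥M) with hg'def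
    have hg'not : ∀ q, q ∉ M → g' q = q := fun q hq =>
      Equiv.Perm.extendDomain_apply_not_subtype e (Equiv.refl ↥M) hq
    have hg'mem : ∀ q (hq : q ∈ M), g' q = ↑(e ⟨q, hq⟩) := by
      intro q hq
      rw [hg'def, Equiv.Perm.extendDomain_apply_subtype e (Equiv.refl ↥M) hq]
      rfl
    have hgG : g' ∈ Ggrp := by
      have hsub : suppP g' ⊆ M := by
        intro q hq
        by_contra hc
        exact hq (hg'not q hc)
      show nrmS (suppP g') < ⊤
      exact lt_of_le_of_lt (nrmS_mono hsub) hMnorm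
    have hinvnot : ∀ p, p ∉ M → g'⁻¹ p = p := by
      intro p hp
      calc g'⁻¹ p = g'⁻¹ (g' p) := by rw [hg'not p hp]
        _ = p := Equiv.symm_apply_apply _ _
    have hinvmem : ∀ p, p ∈ M → g'⁻¹ p ∈ M := by
      intro p hp
      by_contra hc
      have h2 : p = g'⁻¹ p := (Equiv.apply_symm_apply g' p).symm.trans (hg'not _ hc)
      exact hc (h2 ▸ hp)
    have hmain : ∀ p, (y : (ℕ × ℕ) → ZMod 2) p = (x : (ℕ × ℕ) → ZMod 2) (g'⁻¹ p) ∧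
        ∀ a ∈ A, (a : (ℕ × ℕ) → ZMod 2) (g'⁻¹ p) = (a : (ℕ × ℕ) → ZMod 2) p := by
      intro p
      by_cases hp : p ∈ M
      · have hq : g'⁻¹ p ∈ M := hinvmem p hp
        have h1 : (↑(e ⟨g'⁻¹ p, hq⟩) : ℕ × ℕ) = p := by
          rw [← hg'mem _ hq]
          exact Equiv.apply_symm_apply _ _
        have h2 := he ⟨g'⁻¹ p, hq⟩
        dsimp only at h2
        rw [h1, Prod.mk.injEq] at h2
        obtain ⟨h3, h4⟩ := h2
        refine ⟨h3, fun a ha => ?_⟩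
        exact (congrFun h4 ⟨a, ha⟩).symm
      · have h1 : g'⁻¹ p = p := hinvnot p hp
        obtain ⟨hx0, hy0, _⟩ := houtD p (fun hc => hp (hDM hc))
        rw [h1, hy0, hx0]
        exact ⟨rfl, fun a ha => rfl⟩
    refine ⟨⟨g', hgG⟩, fun a ha => ?_, ?_⟩
    · apply Subtype.ext
      funext p
      exact (hmain p).2 a ha
    · apply Subtype.ext
      funext p
      exact ((hmain p).1).symm
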